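/- For every n ≥ 7, every reset word for the automaton 𝒜_n has length at least 4n − 13; that is, the reset threshold of 𝒜_n is at least 4n − 13. -/
import Mathlib


/-- The two letters of a binary alphabet. -/
inductive Letter where
  | a : Letter
  | b : Letter
deriving DecidableEq

/-- The transition function of the automaton `𝒜ₙ` on the state set
`Qₙ = {0, 1, …, n-1}` (represented inside `ℕ`):
`δ(0,a)=δ(0,b)=0`; `δ(1,a)=0`, `δ(2,a)=4`, `δ(3,a)=2`, `δ(4,a)=3`;
`δ(1,b)=3`, `δ(2,b)=1`, `δ(3,b)=2`; and for `4 ≤ j ≤ n-1`: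
`δ(j,a) = j-1` if `j ≥ 6` is even, `δ(j,a) = j+1` if `j ≥ 5` is odd and
`j ≠ n-1`, `δ(j,a) = j` if `j = n-1` is odd; `δ(j,b) = j-1` if `j ≥ 5` is odd,
`δ(j,b) = j+1` if `j ≥ 4` is even and `j ≠ n-1`, `δ(j,b) = j` if `j = n-1`
is even. -/
def anDelta (n : ℕ) (q : ℕ) (ℓ : Letter) : ℕ :=
  match q, ℓ with
  | 0, _ => 0
  | 1, Letter.a => 0
  | 1, Letter.b => 3
  | 2, Letter.a => 4
  | 2, Letter.b => 1
  | 3, _ => 2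
  | 4, Letter.a => 3
  | j, Letter.a => if j % 2 = 1 then (if j = n - 1 then j else j + 1) else j - 1
  | j, Letter.b => if j % 2 = 0 then (if j = n - 1 then j else j + 1) else j - 1

/-- Extension of the transition function of `𝒜ₙ` to words:
`δ(q, uv) = δ(δ(q, u), v)`. -/
def anStar (n : ℕ) (q : ℕ) (w : List Letter) : ℕ :=
  w.foldl (anDelta n) q

namespace AnResetProof

lemma delta_a_ge5 (n q : ℕ) (h : 5 ≤ q) :
    anDelta n q Letter.a = if q % 2 = 1 then (if q = n - 1 then q else q + 1) else q - 1 := by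
  obtain ⟨k, rfl⟩ : ∃ k, q = k + 5 := ⟨q - 5, by omega⟩
  rfl

lemma delta_b_ge5 (n q : ℕ) (h : 5 ≤ q) :
    anDelta n q Letter.b = if q % 2 = 0 then (if q = n - 1 then q else q + 1) else q - 1 := by
  obtain ⟨k, rfl⟩ : ∃ k, q = k + 5 := ⟨q - 5, by omega⟩
  rfl

lemma da0 (n : ℕ) : anDelta n 0 Letter.a = 0 := rfl
lemma da1 (n : ℕ) : anDelta n 1 Letter.a = 0 := rfl
lemma da2 (n : ℕ) : anDelta n 2 Letter.a = 4 := rfl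
lemma da3 (n : ℕ) : anDelta n 3 Letter.a = 2 := rfl
lemma da4 (n : ℕ) : anDelta n 4 Letter.a = 3 := rfl
lemma db0 (n : ℕ) : anDelta n 0 Letter.b = 0 := rfl
lemma db1 (n : ℕ) : anDelta n 1 Letter.b = 3 := rfl
lemma db2 (n : ℕ) : anDelta n 2 Letter.b = 1 := rfl
lemma db3 (n : ℕ) : anDelta n 3 Letter.b = 2 := rfl
lemma db4 (n : ℕ) (hn : 7 ≤ n) : anDelta n 4 Letter.b = 5 := by
  show (if 4 % 2 = 0 then (if 4 = n - 1 then 4 else 4 + 1) else 4 - 1) = 5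
  rw [if_pos (by omega), if_neg (by omega)]

/-- Full characterization of letter `a` on states `< n`. -/
lemma fa_spec (n q : ℕ) (hn : 7 ≤ n) (hq : q < n) :
    (anDelta n q Letter.a = 0 ↔ (q = 0 ∨ q = 1)) ∧
    (anDelta n q Letter.a ≠ 1) ∧
    (anDelta n q Letter.a = 2 ↔ q = 3) ∧
    (anDelta n q Letter.a = 3 ↔ q = 4) ∧
    (anDelta n q Letter.a = 4 ↔ q = 2) ∧
    (anDelta n q Letter.a = 5 ↔ q = 6) ∧
    (anDelta n q Letter.a = 6 ↔ q = 5) ∧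
    (6 ≤ anDelta n q Letter.a ↔ (q = 5 ∨ 7 ≤ q)) ∧
    anDelta n q Letter.a < n := by
  rcases Nat.lt_or_ge q 5 with h | h
  · interval_cases q <;>
      refine ⟨?_, ?_, ?_, ?_, ?_, ?_, ?_, ?_, ?_⟩ <;>
      simp only [da0, da1, da2, da3, da4] <;>
      first
        | omega
        | (simp only [false_iff, iff_false, true_iff, iff_true, ne_eq, not_or]; omega)
        | simp
  · rw [delta_a_ge5 n q h]
    split_ifs <;>
      refine ⟨?_, ?_, ?_, ?_, ?_, ?_, ?_, ?_, ?_⟩ <;>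
      first
        | omega
        | (simp only [false_iff, iff_false, true_iff, iff_true, ne_eq, not_or]; omega)
        | simp

/-- Full characterization of letter `b` on states `< n`. -/
lemma fb_spec (n q : ℕ) (hn : 7 ≤ n) (hq : q < n) :
    (anDelta n q Letter.b = 0 ↔ q = 0) ∧
    (anDelta n q Letter.b = 1 ↔ q = 2) ∧
    (anDelta n q Letter.b = 2 ↔ q = 3) ∧
    (anDelta n q Letter.b = 3 ↔ q = 1) ∧
    (anDelta n q Letter.b = 4 ↔ q = 5) ∧
    (anDelta n q Letter.b = 5 ↔ q = 4) ∧
    (6 ≤ anDelta n q Letter.b ↔ 6 ≤ q) ∧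
    anDelta n q Letter.b < n := by
  rcases Nat.lt_or_ge q 5 with h | h
  · interval_cases q <;>
      refine ⟨?_, ?_, ?_, ?_, ?_, ?_, ?_, ?_⟩ <;>
      simp only [db0, db1, db2, db3, db4 n hn] <;>
      first
        | omega
        | (simp only [false_iff, iff_false, true_iff, iff_true, ne_eq, not_or]; omega)
        | simp
  · rw [delta_b_ge5 n q h]
    split_ifs <;>
      refine ⟨?_, ?_, ?_, ?_, ?_, ?_, ?_, ?_⟩ <;>
      first
        | omega
        | (simp only [false_iff, iff_false, true_iff, iff_true, ne_eq, not_or]; omega)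
        | simp

lemma fa_invol (n q : ℕ) (hn : 7 ≤ n) (h5 : 5 ≤ q) (hq : q < n) :
    anDelta n (anDelta n q Letter.a) Letter.a = q := by
  rw [delta_a_ge5 n q h5]
  rcases Nat.mod_two_eq_zero_or_one q with hm | hm
  · rw [if_neg (by omega)]
    rw [delta_a_ge5 n (q - 1) (by omega), if_pos (by omega), if_neg (by omega)]
    omega
  · rw [if_pos hm]
    by_cases he : q = n - 1
    · rw [if_pos he, delta_a_ge5 n q h5, if_pos hm, if_pos he]
    · rw [if_neg he, delta_a_ge5 n (q + 1) (by omega), if_neg (by omega)]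
      omega

lemma fb_invol (n q : ℕ) (hn : 7 ≤ n) (h6 : 6 ≤ q) (hq : q < n) :
    anDelta n (anDelta n q Letter.b) Letter.b = q := by
  rw [delta_b_ge5 n q (by omega)]
  rcases Nat.mod_two_eq_zero_or_one q with hm | hm
  · rw [if_pos hm]
    by_cases he : q = n - 1
    · rw [if_pos he, delta_b_ge5 n q (by omega), if_pos hm, if_pos he]
    · rw [if_neg he, delta_b_ge5 n (q + 1) (by omega), if_neg (by omega)]
      omega
  · rw [if_neg (by omega)]
    rw [delta_b_ge5 n (q - 1) (by omega), if_pos (by omega), if_neg (by omega)]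
    omega

end AnResetProof
namespace AnResetProof

lemma da5 (n : ℕ) (hn : 7 ≤ n) : anDelta n 5 Letter.a = 6 := by
  rw [delta_a_ge5 n 5 (by omega), if_pos (by omega), if_neg (by omega)]
lemma da6 (n : ℕ) : anDelta n 6 Letter.a = 5 := by
  rw [delta_a_ge5 n 6 (by omega), if_neg (by omega)]
lemma db5 (n : ℕ) : anDelta n 5 Letter.b = 4 := by
  rw [delta_b_ge5 n 5 (by omega), if_neg (by omega)]

variable {n : ℕ} {S : Finset ℕ}

lemma mem_image_a (hn : 7 ≤ n) (hS : S ⊆ Finset.range n) :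
    ((0 ∈ S.image (fun q => anDelta n q Letter.a)) ↔ (0 ∈ S ∨ 1 ∈ S)) ∧
    ((1 ∈ S.image (fun q => anDelta n q Letter.a)) ↔ False) ∧
    ((2 ∈ S.image (fun q => anDelta n q Letter.a)) ↔ 3 ∈ S) ∧
    ((3 ∈ S.image (fun q => anDelta n q Letter.a)) ↔ 4 ∈ S) ∧
    ((4 ∈ S.image (fun q => anDelta n q Letter.a)) ↔ 2 ∈ S) ∧
    ((5 ∈ S.image (fun q => anDelta n q Letter.a)) ↔ 6 ∈ S) ∧
    ((6 ∈ S.image (fun q => anDelta n q Letter.a)) ↔ 5 ∈ S) := by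
  refine ⟨?_, ?_, ?_, ?_, ?_, ?_, ?_⟩ <;> simp only [Finset.mem_image] <;>
    constructor
  · rintro ⟨q, hq, e⟩
    have spec := fa_spec n q hn (Finset.mem_range.mp (hS hq))
    rcases spec.1.mp e with rfl | rfl
    · exact Or.inl hq
    · exact Or.inr hq
  · rintro (h | h)
    · exact ⟨0, h, da0 n⟩
    · exact ⟨1, h, da1 n⟩
  · rintro ⟨q, hq, e⟩
    exact (fa_spec n q hn (Finset.mem_range.mp (hS hq))).2.1 e
  · exact fun h => h.elim
  · rintro ⟨q, hq, e⟩
    obtain rfl := (fa_spec n q hn (Finset.mem_range.mp (hS hq))).2.2.1.mp e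
    exact hq
  · exact fun h => ⟨3, h, da3 n⟩
  · rintro ⟨q, hq, e⟩
    obtain rfl := (fa_spec n q hn (Finset.mem_range.mp (hS hq))).2.2.2.1.mp e
    exact hq
  · exact fun h => ⟨4, h, da4 n⟩
  · rintro ⟨q, hq, e⟩
    obtain rfl := (fa_spec n q hn (Finset.mem_range.mp (hS hq))).2.2.2.2.1.mp e
    exact hq
  · exact fun h => ⟨2, h, da2 n⟩
  · rintro ⟨q, hq, e⟩
    obtain rfl := (fa_spec n q hn (Finset.mem_range.mp (hS hq))).2.2.2.2.2.1.mp e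
    exact hq
  · exact fun h => ⟨6, h, da6 n⟩
  · rintro ⟨q, hq, e⟩
    obtain rfl := (fa_spec n q hn (Finset.mem_range.mp (hS hq))).2.2.2.2.2.2.1.mp e
    exact hq
  · exact fun h => ⟨5, h, da5 n hn⟩

lemma mem_image_b (hn : 7 ≤ n) (hS : S ⊆ Finset.range n) :
    ((0 ∈ S.image (fun q => anDelta n q Letter.b)) ↔ 0 ∈ S) ∧
    ((1 ∈ S.image (fun q => anDelta n q Letter.b)) ↔ 2 ∈ S) ∧
    ((2 ∈ S.image (fun q => anDelta n q Letter.b)) ↔ 3 ∈ S) ∧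
    ((3 ∈ S.image (fun q => anDelta n q Letter.b)) ↔ 1 ∈ S) ∧
    ((4 ∈ S.image (fun q => anDelta n q Letter.b)) ↔ 5 ∈ S) ∧
    ((5 ∈ S.image (fun q => anDelta n q Letter.b)) ↔ 4 ∈ S) := by
  refine ⟨?_, ?_, ?_, ?_, ?_, ?_⟩ <;> simp only [Finset.mem_image] <;> constructor
  · rintro ⟨q, hq, e⟩
    obtain rfl := (fb_spec n q hn (Finset.mem_range.mp (hS hq))).1.mp e
    exact hq
  · exact fun h => ⟨0, h, db0 n⟩
  · rintro ⟨q, hq, e⟩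
    obtain rfl := (fb_spec n q hn (Finset.mem_range.mp (hS hq))).2.1.mp e
    exact hq
  · exact fun h => ⟨2, h, db2 n⟩
  · rintro ⟨q, hq, e⟩
    obtain rfl := (fb_spec n q hn (Finset.mem_range.mp (hS hq))).2.2.1.mp e
    exact hq
  · exact fun h => ⟨3, h, db3 n⟩
  · rintro ⟨q, hq, e⟩
    obtain rfl := (fb_spec n q hn (Finset.mem_range.mp (hS hq))).2.2.2.1.mp e
    exact hq
  · exact fun h => ⟨1, h, db1 n⟩
  · rintro ⟨q, hq, e⟩
    obtain rfl := (fb_spec n q hn (Finset.mem_range.mp (hS hq))).2.2.2.2.1.mp e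
    exact hq
  · exact fun h => ⟨5, h, db5 n⟩
  · rintro ⟨q, hq, e⟩
    obtain rfl := (fb_spec n q hn (Finset.mem_range.mp (hS hq))).2.2.2.2.2.1.mp e
    exact hq
  · exact fun h => ⟨4, h, db4 n hn⟩

lemma filter_image_a (hn : 7 ≤ n) (hS : S ⊆ Finset.range n) :
    (S.image (fun q => anDelta n q Letter.a)).filter (fun x => 6 ≤ x)
      = (S.filter (fun q => q = 5 ∨ 7 ≤ q)).image (fun q => anDelta n q Letter.a) := by
  ext x
  simp only [Finset.mem_filter, Finset.mem_image]
  constructor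
  · rintro ⟨⟨q, hq, rfl⟩, hx⟩
    exact ⟨q, ⟨hq, ((fa_spec n q hn (Finset.mem_range.mp (hS hq))).2.2.2.2.2.2.2.1).mp hx⟩, rfl⟩
  · rintro ⟨q, ⟨hq, hcond⟩, rfl⟩
    exact ⟨⟨q, hq, rfl⟩, ((fa_spec n q hn (Finset.mem_range.mp (hS hq))).2.2.2.2.2.2.2.1).mpr hcond⟩

lemma filter_image_b (hn : 7 ≤ n) (hS : S ⊆ Finset.range n) :
    (S.image (fun q => anDelta n q Letter.b)).filter (fun x => 6 ≤ x)
      = (S.filter (fun q => 6 ≤ q)).image (fun q => anDelta n q Letter.b) := by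
  ext x
  simp only [Finset.mem_filter, Finset.mem_image]
  constructor
  · rintro ⟨⟨q, hq, rfl⟩, hx⟩
    exact ⟨q, ⟨hq, ((fb_spec n q hn (Finset.mem_range.mp (hS hq))).2.2.2.2.2.2.1).mp hx⟩, rfl⟩
  · rintro ⟨q, ⟨hq, hcond⟩, rfl⟩
    exact ⟨⟨q, hq, rfl⟩, ((fb_spec n q hn (Finset.mem_range.mp (hS hq))).2.2.2.2.2.2.1).mpr hcond⟩

lemma card_image_a (hn : 7 ≤ n) (hS : S ⊆ Finset.range n) :
    ((S.filter (fun q => q = 5 ∨ 7 ≤ q)).image (fun q => anDelta n q Letter.a)).card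
      = (S.filter (fun q => q = 5 ∨ 7 ≤ q)).card := by
  apply Finset.card_image_of_injOn
  intro x hx y hy hxy
  obtain ⟨hxS, hxc⟩ := Finset.mem_filter.mp hx
  obtain ⟨hyS, hyc⟩ := Finset.mem_filter.mp hy
  have hx5 : 5 ≤ x := by omega
  have hy5 : 5 ≤ y := by omega
  have hxn := Finset.mem_range.mp (hS hxS)
  have hyn := Finset.mem_range.mp (hS hyS)
  have hxy' : anDelta n x Letter.a = anDelta n y Letter.a := hxy
  calc x = anDelta n (anDelta n x Letter.a) Letter.a := (fa_invol n x hn hx5 hxn).symm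
    _ = anDelta n (anDelta n y Letter.a) Letter.a := by rw [hxy']
    _ = y := fa_invol n y hn hy5 hyn

lemma card_image_b (hn : 7 ≤ n) (hS : S ⊆ Finset.range n) :
    ((S.filter (fun q => 6 ≤ q)).image (fun q => anDelta n q Letter.b)).card
      = (S.filter (fun q => 6 ≤ q)).card := by
  apply Finset.card_image_of_injOn
  intro x hx y hy hxy
  obtain ⟨hxS, hxc⟩ := Finset.mem_filter.mp hx
  obtain ⟨hyS, hyc⟩ := Finset.mem_filter.mp hy
  have hxn := Finset.mem_range.mp (hS hxS)
  have hyn := Finset.mem_range.mp (hS hyS)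
  have hxy' : anDelta n x Letter.b = anDelta n y Letter.b := hxy
  calc x = anDelta n (anDelta n x Letter.b) Letter.b := (fb_invol n x hn hxc hxn).symm
    _ = anDelta n (anDelta n y Letter.b) Letter.b := by rw [hxy']
    _ = y := fb_invol n y hn hyc hyn

lemma image_subset_range (hn : 7 ≤ n) (hS : S ⊆ Finset.range n) (ℓ : Letter) :
    S.image (fun q => anDelta n q ℓ) ⊆ Finset.range n := by
  intro x hx
  obtain ⟨q, hq, rfl⟩ := Finset.mem_image.mp hx
  have hqn := Finset.mem_range.mp (hS hq)
  cases ℓ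
  · exact Finset.mem_range.mpr (fa_spec n q hn hqn).2.2.2.2.2.2.2.2
  · exact Finset.mem_range.mpr (fb_spec n q hn hqn).2.2.2.2.2.2.2

end AnResetProof
namespace AnResetProof

/-- Table of the window potential. -/
def gTab : List ℕ := [0, 9, 0, 10, 0, 11, 1, 12, 1, 12, 0, 11, 2, 13, 0, 0, 2, 12, 2, 13, 4, 15, 4, 15, 3, 14, 0, 12, 2, 13, 0, 0, 3, 13, 3, 14, 3, 14, 1, 13, 5, 16, 3, 14, 5, 16, 0, 0, 3, 15, 5, 16, 6, 17, 4, 18, 7, 18, 3, 17, 5, 17, 0, 19, 0, 9, 0, 10, 0, 11, 1, 12, 0, 11, 0, 11, 2, 13, 0, 0, 2, 12, 2, 13, 4, 15, 4, 15, 2, 13, 0, 12, 2, 14, 0, 0, 1, 13, 3, 14, 2, 14, 1, 13, 1, 15, 3, 14, 4, 16, 0, 0, 2, 14, 5, 16, 6, 17, 4, 18, 5, 17, 3, 17, 2, 19, 0, 20]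

/-- Window potential as a function of seven membership bits. -/
def G (x0 x1 x2 x3 x4 x5 x6 : Bool) : ℕ :=
  gTab.getD (x0.toNat + 2 * x1.toNat + 4 * x2.toNat + 8 * x3.toNat + 16 * x4.toNat
    + 32 * x5.toNat + 64 * x6.toNat) 0

lemma G_a : ∀ x0 x1 x2 x3 x4 x5 x6 : Bool,
    G x0 x1 x2 x3 x4 x5 x6 + 4 * x6.toNat ≤
      G (x0 || x1) false x3 x4 x2 x6 x5 + 4 * x5.toNat + 1 := by decide

lemma G_b : ∀ x0 x1 x2 x3 x4 x5 x6 t : Bool,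
    G x0 x1 x2 x3 x4 x5 x6 ≤ G x0 x2 x3 x1 x5 x4 t + 1 := by decide

/-- The potential function on subsets of the state set. -/
def Phi (S : Finset ℕ) : ℕ :=
  4 * (S.filter (fun q => 6 ≤ q)).card +
    G (decide (0 ∈ S)) (decide (1 ∈ S)) (decide (2 ∈ S)) (decide (3 ∈ S))
      (decide (4 ∈ S)) (decide (5 ∈ S)) (decide (6 ∈ S))

lemma card_split (S : Finset ℕ) (m : ℕ) :
    (S.filter (fun q => m ≤ q)).card
      = (S.filter (fun q => m + 1 ≤ q)).card + (if m ∈ S then 1 else 0) := by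
  by_cases hm : m ∈ S
  · rw [if_pos hm]
    have he : S.filter (fun q => m ≤ q) = insert m (S.filter (fun q => m + 1 ≤ q)) := by
      ext x
      simp only [Finset.mem_filter, Finset.mem_insert]
      constructor
      · rintro ⟨hx, hmx⟩
        by_cases hxm : x = m
        · exact Or.inl hxm
        · exact Or.inr ⟨hx, by omega⟩
      · intro hh
        rcases hh with hh | hh
        · subst hh; exact ⟨hm, by omega⟩
        · exact ⟨hh.1, by omega⟩
    rw [he, Finset.card_insert_of_notMem (by simp)]
  · rw [if_neg hm]
    congr 1
    ext x
    simp only [Finset.mem_filter]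
    constructor
    · rintro ⟨hx, hmx⟩
      have hne : x ≠ m := fun h => hm (h ▸ hx)
      exact ⟨hx, by omega⟩
    · rintro ⟨hx, hmx⟩
      exact ⟨hx, by omega⟩

lemma card_split5 (S : Finset ℕ) :
    (S.filter (fun q => q = 5 ∨ 7 ≤ q)).card
      = (S.filter (fun q => 7 ≤ q)).card + (if 5 ∈ S then 1 else 0) := by
  by_cases hm : (5 : ℕ) ∈ S
  · rw [if_pos hm]
    have he : S.filter (fun q => q = 5 ∨ 7 ≤ q) = insert 5 (S.filter (fun q => 7 ≤ q)) := by
      ext x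
      simp only [Finset.mem_filter, Finset.mem_insert]
      constructor
      · rintro ⟨hx, hmx | hmx⟩
        · exact Or.inl hmx
        · exact Or.inr ⟨hx, hmx⟩
      · intro hh
        rcases hh with hh | hh
        · subst hh; exact ⟨hm, Or.inl rfl⟩
        · exact ⟨hh.1, Or.inr hh.2⟩
    rw [he, Finset.card_insert_of_notMem (by simp)]
  · rw [if_neg hm]
    congr 1
    ext x
    simp only [Finset.mem_filter]
    constructor
    · rintro ⟨hx, hmx | hmx⟩
      · exact absurd (hmx ▸ hx) hm
      · exact ⟨hx, hmx⟩
    · rintro ⟨hx, hmx⟩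
      exact ⟨hx, Or.inr hmx⟩

lemma card_split6 (S : Finset ℕ) :
    (S.filter (fun q => 6 ≤ q)).card
      = (S.filter (fun q => 7 ≤ q)).card + (if 6 ∈ S then 1 else 0) := by
  have h := card_split S 6
  have he : S.filter (fun q => 6 + 1 ≤ q) = S.filter (fun q => 7 ≤ q) := by
    ext x
    simp only [Finset.mem_filter]
    try omega
  rwa [he] at h

lemma toNat_decide (p : Prop) [Decidable p] : (decide p).toNat = if p then 1 else 0 := by
  by_cases h : p <;> simp [h]

lemma decide_or' (p q : Prop) [Decidable p] [Decidable q] :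
    decide (p ∨ q) = (decide p || decide q) := by
  by_cases hp : p <;> by_cases hq : q <;> simp [hp, hq]

lemma step_a (hn : 7 ≤ n) (hS : S ⊆ Finset.range n) :
    Phi S ≤ Phi (S.image (fun q => anDelta n q Letter.a)) + 1 := by
  have hmem := mem_image_a hn hS
  set T := S.image (fun q => anDelta n q Letter.a) with hT
  have e1 : (T.filter (fun x => 6 ≤ x)).card
      = (S.filter (fun q => 7 ≤ q)).card + (if 5 ∈ S then 1 else 0) := by
    rw [hT, filter_image_a hn hS, card_image_a hn hS, card_split5]
  have e2 := card_split6 S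
  have b0 : decide (0 ∈ T) = (decide (0 ∈ S) || decide (1 ∈ S)) := by
    rw [decide_eq_decide.mpr hmem.1, decide_or']
  have b1 : decide (1 ∈ T) = false := by
    simp only [decide_eq_false_iff_not]
    exact fun h => hmem.2.1.mp h
  have b2 : decide (2 ∈ T) = decide (3 ∈ S) := decide_eq_decide.mpr hmem.2.2.1
  have b3 : decide (3 ∈ T) = decide (4 ∈ S) := decide_eq_decide.mpr hmem.2.2.2.1
  have b4 : decide (4 ∈ T) = decide (2 ∈ S) := decide_eq_decide.mpr hmem.2.2.2.2.1
  have b5 : decide (5 ∈ T) = decide (6 ∈ S) := decide_eq_decide.mpr hmem.2.2.2.2.2.1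
  have b6 : decide (6 ∈ T) = decide (5 ∈ S) := decide_eq_decide.mpr hmem.2.2.2.2.2.2
  have hG := G_a (decide (0 ∈ S)) (decide (1 ∈ S)) (decide (2 ∈ S)) (decide (3 ∈ S))
    (decide (4 ∈ S)) (decide (5 ∈ S)) (decide (6 ∈ S))
  rw [toNat_decide, toNat_decide] at hG
  unfold Phi
  rw [b0, b1, b2, b3, b4, b5, b6, e1, e2]
  omega

lemma step_b (hn : 7 ≤ n) (hS : S ⊆ Finset.range n) :
    Phi S ≤ Phi (S.image (fun q => anDelta n q Letter.b)) + 1 := by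
  have hmem := mem_image_b hn hS
  set T := S.image (fun q => anDelta n q Letter.b) with hT
  have e1 : (T.filter (fun x => 6 ≤ x)).card = (S.filter (fun q => 6 ≤ q)).card := by
    rw [hT, filter_image_b hn hS, card_image_b hn hS]
  have b0 : decide (0 ∈ T) = decide (0 ∈ S) := decide_eq_decide.mpr hmem.1
  have b1 : decide (1 ∈ T) = decide (2 ∈ S) := decide_eq_decide.mpr hmem.2.1
  have b2 : decide (2 ∈ T) = decide (3 ∈ S) := decide_eq_decide.mpr hmem.2.2.1
  have b3 : decide (3 ∈ T) = decide (1 ∈ S) := decide_eq_decide.mpr hmem.2.2.2.1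
  have b4 : decide (4 ∈ T) = decide (5 ∈ S) := decide_eq_decide.mpr hmem.2.2.2.2.1
  have b5 : decide (5 ∈ T) = decide (4 ∈ S) := decide_eq_decide.mpr hmem.2.2.2.2.2
  have hG := G_b (decide (0 ∈ S)) (decide (1 ∈ S)) (decide (2 ∈ S)) (decide (3 ∈ S))
    (decide (4 ∈ S)) (decide (5 ∈ S)) (decide (6 ∈ S)) (decide (6 ∈ T))
  unfold Phi
  rw [b0, b1, b2, b3, b4, b5, e1]
  omega

end AnResetProof
namespace AnResetProof

lemma key (n : ℕ) (hn : 7 ≤ n) :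
    ∀ (w : List Letter) (S : Finset ℕ), S ⊆ Finset.range n →
      Phi S ≤ Phi (S.image (fun q => anStar n q w)) + w.length := by
  intro w
  induction w with
  | nil =>
      intro S hS
      have : S.image (fun q => anStar n q []) = S := by
        have : (fun q => anStar n q []) = fun q => q := rfl
        rw [this, Finset.image_id']
      rw [this]
      simp
  | cons ℓ w ih =>
      intro S hS
      have h1 : S.image (fun q => anStar n q (ℓ :: w))
          = (S.image (fun q => anDelta n q ℓ)).image (fun q => anStar n q w) := by
        rw [Finset.image_image]
        rfl
      have hsub := image_subset_range hn hS ℓ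
      have hihyp := ih (S.image (fun q => anDelta n q ℓ)) hsub
      have hstep : Phi S ≤ Phi (S.image (fun q => anDelta n q ℓ)) + 1 := by
        cases ℓ
        · exact step_a hn hS
        · exact step_b hn hS
      rw [h1]
      simp only [List.length_cons]
      omega

lemma anStar_zero (n : ℕ) (w : List Letter) : anStar n 0 w = 0 := by
  induction w with
  | nil => rfl
  | cons ℓ w ih =>
      have h : anStar n 0 (ℓ :: w) = anStar n (anDelta n 0 ℓ) w := rfl
      have h0 : anDelta n 0 ℓ = 0 := by cases ℓ <;> rfl
      rw [h, h0, ih]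

lemma phi_range (n : ℕ) (hn : 7 ≤ n) : Phi (Finset.range n) = 4 * (n - 6) + 20 := by
  unfold Phi
  have hcard : ((Finset.range n).filter (fun q => 6 ≤ q)).card = n - 6 := by
    have he : (Finset.range n).filter (fun q => 6 ≤ q) = Finset.Ico 6 n := by
      ext x
      simp only [Finset.mem_filter, Finset.mem_range, Finset.mem_Ico]
      omega
    rw [he, Nat.card_Ico]
  have hb : ∀ i : ℕ, i < 7 → decide (i ∈ Finset.range n) = true := by
    intro i hi
    exact decide_eq_true (Finset.mem_range.mpr (by omega))
  rw [hcard, hb 0 (by omega), hb 1 (by omega), hb 2 (by omega), hb 3 (by omega),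
    hb 4 (by omega), hb 5 (by omega), hb 6 (by omega)]
  rfl

lemma phi_single : Phi ({0} : Finset ℕ) = 9 := by
  unfold Phi
  have hcard : (({0} : Finset ℕ).filter (fun q => 6 ≤ q)).card = 0 := by
    rw [Finset.filter_singleton]
    norm_num
  have h0 : decide ((0 : ℕ) ∈ ({0} : Finset ℕ)) = true := by simp
  have hi : ∀ i : ℕ, 1 ≤ i → decide (i ∈ ({0} : Finset ℕ)) = false := by
    intro i h
    simp only [decide_eq_false_iff_not, Finset.mem_singleton]
    omega
  rw [hcard, h0, hi 1 (by omega), hi 2 (by omega), hi 3 (by omega), hi 4 (by omega),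
    hi 5 (by omega), hi 6 (by omega)]
  rfl

end AnResetProof

/-- For every `n ≥ 7`, every reset word for the automaton `𝒜ₙ` has length at
least `4n - 13`; that is, the reset threshold of `𝒜ₙ` is at least `4n - 13`. -/
theorem an_resetThreshold_lower_bound (n : ℕ) (hn : 7 ≤ n) :
    ∀ w : List Letter,
      (∀ p q : ℕ, p < n → q < n → anStar n p w = anStar n q w) →
      4 * n - 13 ≤ w.length := by
  intro w hw
  have hkey := AnResetProof.key n hn w (Finset.range n) (by intro x hx; exact hx)
  have himg : (Finset.range n).image (fun q => anStar n q w) = {0} := by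
    ext x
    simp only [Finset.mem_image, Finset.mem_singleton, Finset.mem_range]
    constructor
    · rintro ⟨q, hq, rfl⟩
      rw [hw q 0 hq (by omega), AnResetProof.anStar_zero]
    · rintro rfl
      exact ⟨0, by omega, AnResetProof.anStar_zero n w⟩
  rw [himg, AnResetProof.phi_range n hn, AnResetProof.phi_single] at hkey
  omega
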